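/- The Möbius function of an interval in the partition lattice of a finite set I is given by: for partitions X ≤ Y of I, μ(X,Y) = (-1)^{ℓ(Y)-ℓ(X)} ∏_{B ∈ X} (n_B − 1)!, where n_B is the number of blocks of Y contained in the block B of X. In particular μ({I}, X) = (-1)^{ℓ(X)-1}(ℓ(X)−1)!. -/

import Mathlib

/-- `X` is a partition of the finite set `I`. -/
def IsPartition {α : Type*} [DecidableEq α] (I : Finset α) (X : Finset (Finset α)) : Prop :=
  (∀ B ∈ X, B ≠ ∅) ∧ (∀ B ∈ X, ∀ C ∈ X, B ≠ C → B ∩ C = ∅) ∧ X.sup id = I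

/-- `X ≤ Y` in the partition lattice of `I`: every block of `X` is a union of blocks
of `Y`. -/
def PartLE {α : Type*} [DecidableEq α] (X Y : Finset (Finset α)) : Prop :=
  ∀ B ∈ X, ∃ S ∈ Y.powerset, S.sup id = B

instance {α : Type*} [DecidableEq α] (I : Finset α) :
    DecidablePred (IsPartition I) := fun _ => by
  unfold IsPartition; infer_instance

instance {α : Type*} [DecidableEq α] (X Y : Finset (Finset α)) :
    Decidable (PartLE X Y) := by
  unfold PartLE; infer_instance

set_option linter.unusedVariables false
set_option maxHeartbeats 1000000

namespace PartAux


variable {α : Type*} [DecidableEq α]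

lemma subset_of_mem {V : Finset α} {X : Finset (Finset α)} (h : IsPartition V X)
    {B : Finset α} (hB : B ∈ X) : B ⊆ V := by
  rw [← h.2.2]; exact Finset.le_sup (f := id) hB

lemma nonempty_of_mem {V : Finset α} {X : Finset (Finset α)} (h : IsPartition V X)
    {B : Finset α} (hB : B ∈ X) : B ≠ ∅ := h.1 B hB

lemma eq_of_mem_inter {V : Finset α} {X : Finset (Finset α)} (h : IsPartition V X)
    {B C : Finset α} (hB : B ∈ X) (hC : C ∈ X) {x : α} (hxB : x ∈ B) (hxC : x ∈ C) :
    B = C := by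
  by_contra hne
  have := h.2.1 B hB C hC hne
  have : x ∈ B ∩ C := Finset.mem_inter.2 ⟨hxB, hxC⟩
  rw [h.2.1 B hB C hC hne] at this
  exact absurd this (Finset.notMem_empty x)

lemma exists_mem {V : Finset α} {X : Finset (Finset α)} (h : IsPartition V X)
    {x : α} (hx : x ∈ V) : ∃ B ∈ X, x ∈ B := by
  rw [← h.2.2] at hx
  simpa using Finset.mem_sup.1 hx

lemma partLE_refl (X : Finset (Finset α)) : PartLE X X := by
  intro B hB
  exact ⟨{B}, by simpa using hB, by simp⟩

/-- a subfamily of a partition is recovered from its union -/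
lemma filter_subfamily {V : Finset α} {Y : Finset (Finset α)} (hY : IsPartition V Y)
    {S : Finset (Finset α)} (hS : S ⊆ Y) :
    Y.filter (fun C => C ⊆ S.sup id) = S := by
  ext C
  simp only [Finset.mem_filter]
  constructor
  · rintro ⟨hCY, hCs⟩
    obtain ⟨x, hx⟩ := Finset.nonempty_iff_ne_empty.2 (hY.1 C hCY)
    have hx' : x ∈ S.sup id := hCs hx
    obtain ⟨C', hC'S, hxC'⟩ := by simpa using Finset.mem_sup.1 hx'
    rwa [eq_of_mem_inter hY hCY (hS hC'S) hx hxC']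
  · intro hCS
    exact ⟨hS hCS, Finset.le_sup (f := id) hCS⟩

/-- every block of the finer partition lies in a block of the coarser one -/
lemma exists_block_subset {V : Finset α} {X Y : Finset (Finset α)}
    (hX : IsPartition V X) (hY : IsPartition V Y) (hXY : PartLE X Y)
    {C : Finset α} (hC : C ∈ Y) : ∃ B ∈ X, C ⊆ B := by
  obtain ⟨x, hx⟩ := Finset.nonempty_iff_ne_empty.2 (hY.1 C hC)
  have hxV : x ∈ V := subset_of_mem hY hC hx
  obtain ⟨B, hBX, hxB⟩ := exists_mem hX hxV
  obtain ⟨S, hS, hsup⟩ := hXY B hBX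
  rw [Finset.mem_powerset] at hS
  refine ⟨B, hBX, ?_⟩
  rw [← hsup] at hxB
  obtain ⟨C', hC'S, hxC'⟩ := by simpa using Finset.mem_sup.1 hxB
  rw [eq_of_mem_inter hY hC (hS hC'S) hx hxC', ← hsup]
  exact Finset.le_sup (f := id) hC'S

/-- the blocks of `Y` inside a block `B` of `X` form a partition of `B` -/
lemma isPartition_filter {V : Finset α} {X Y : Finset (Finset α)}
    (hX : IsPartition V X) (hY : IsPartition V Y) (hXY : PartLE X Y)
    {B : Finset α} (hB : B ∈ X) : IsPartition B (Y.filter (fun C => C ⊆ B)) := by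
  obtain ⟨S, hS, hsup⟩ := hXY B hB
  rw [Finset.mem_powerset] at hS
  have hfil : Y.filter (fun C => C ⊆ B) = S := by
    rw [← hsup]; exact filter_subfamily hY hS
  refine ⟨fun C hC => hY.1 C (Finset.mem_filter.1 hC).1,
    fun C hC D hD h => hY.2.1 C (Finset.mem_filter.1 hC).1 D (Finset.mem_filter.1 hD).1 h, ?_⟩
  rw [hfil, hsup]

lemma eq_empty {X : Finset (Finset α)} (h : IsPartition (∅ : Finset α) X) : X = ∅ := by
  rcases Finset.eq_empty_or_nonempty X with h' | ⟨B, hB⟩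
  · exact h'
  · exact absurd (Finset.subset_empty.1 (subset_of_mem h hB)) (h.1 B hB)

lemma filter_nonempty {V : Finset α} {X Y : Finset (Finset α)}
    (hX : IsPartition V X) (hY : IsPartition V Y) (hXY : PartLE X Y)
    {B : Finset α} (hB : B ∈ X) : (Y.filter (fun C => C ⊆ B)).Nonempty := by
  rcases Finset.eq_empty_or_nonempty (Y.filter (fun C => C ⊆ B)) with h' | h'
  · have := (isPartition_filter hX hY hXY hB).2.2
    rw [h'] at this
    simp only [Finset.sup_empty, Finset.bot_eq_empty] at this
    exact absurd this.symm (hX.1 B hB)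
  · exact h'

lemma biUnion_filter {V : Finset α} {X Y : Finset (Finset α)}
    (hX : IsPartition V X) (hY : IsPartition V Y) (hXY : PartLE X Y) :
    X.biUnion (fun B => Y.filter (fun C => C ⊆ B)) = Y := by
  ext C
  simp only [Finset.mem_biUnion, Finset.mem_filter]
  constructor
  · rintro ⟨B, hB, hC, _⟩; exact hC
  · intro hC
    obtain ⟨B, hB, hCB⟩ := exists_block_subset hX hY hXY hC
    exact ⟨B, hB, hC, hCB⟩

lemma card_sum {V : Finset α} {X Y : Finset (Finset α)}
    (hX : IsPartition V X) (hY : IsPartition V Y) (hXY : PartLE X Y) :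
    Y.card = ∑ B ∈ X, (Y.filter (fun C => C ⊆ B)).card := by
  have hbi := biUnion_filter hX hY hXY
  have : Y.card = (X.biUnion (fun B => Y.filter (fun C => C ⊆ B))).card := by rw [hbi]
  rw [this, Finset.card_biUnion]
  intro B hB B' hB' hne
  rw [Function.onFun, Finset.disjoint_left]
  intro C hC hC'
  simp only [Finset.mem_filter] at hC hC'
  have h1 : C ⊆ B ∩ B' := Finset.subset_inter hC.2 hC'.2
  rw [hX.2.1 B hB B' hB' hne] at h1
  exact hY.1 C hC.1 (Finset.subset_empty.1 h1)

lemma eq_of_subset {V : Finset α} {X Y : Finset (Finset α)}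
    (hX : IsPartition V X) (hY : IsPartition V Y) (hs : X ⊆ Y) : X = Y := by
  refine Finset.Subset.antisymm hs fun C hC => ?_
  obtain ⟨x, hx⟩ := Finset.nonempty_iff_ne_empty.2 (hY.1 C hC)
  obtain ⟨B, hB, hxB⟩ := exists_mem hX (subset_of_mem hY hC hx)
  rwa [eq_of_mem_inter hY hC (hs hB) hx hxB]

lemma card_lt {V : Finset α} {X Y : Finset (Finset α)}
    (hX : IsPartition V X) (hY : IsPartition V Y) (hXY : PartLE X Y) (hne : X ≠ Y) :
    X.card < Y.card := by
  have hsum := card_sum hX hY hXY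
  have hpos : ∀ B ∈ X, 1 ≤ (Y.filter (fun C => C ⊆ B)).card := fun B hB =>
    Finset.card_pos.2 (filter_nonempty hX hY hXY hB)
  by_cases hall : ∀ B ∈ X, (Y.filter (fun C => C ⊆ B)).card = 1
  · -- then X ⊆ Y hence X = Y, contradiction
    exfalso
    apply hne
    apply eq_of_subset hX hY
    intro B hB
    obtain ⟨C, hC⟩ := Finset.card_eq_one.1 (hall B hB)
    have hpart := isPartition_filter hX hY hXY hB
    have : B = C := by
      have := hpart.2.2
      rw [hC] at this
      simpa using this.symm
    have hCY : C ∈ Y := (Finset.mem_filter.1 (hC ▸ Finset.mem_singleton_self C)).1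
    rwa [this]
  · push_neg at hall
    obtain ⟨B₀, hB₀, hne1⟩ := hall
    calc X.card = ∑ B ∈ X, 1 := by simp
    _ < ∑ B ∈ X, (Y.filter (fun C => C ⊆ B)).card := by
        refine Finset.sum_lt_sum hpos ⟨B₀, hB₀, ?_⟩
        have := hpos B₀ hB₀
        omega
    _ = Y.card := hsum.symm

lemma isPartition_erase {V : Finset α} {X : Finset (Finset α)}
    (hX : IsPartition V X) {B : Finset α} (hB : B ∈ X) :
    IsPartition (V \ B) (X.erase B) := by
  refine ⟨fun C hC => hX.1 C (Finset.mem_of_mem_erase hC),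
    fun C hC D hD h => hX.2.1 C (Finset.mem_of_mem_erase hC) D (Finset.mem_of_mem_erase hD) h, ?_⟩
  apply Finset.Subset.antisymm
  · intro x hx
    simp only [Finset.mem_sup, id] at hx
    obtain ⟨C, hC, hxC⟩ := hx
    have hCX := Finset.mem_of_mem_erase hC
    have hCB := Finset.ne_of_mem_erase hC
    rw [Finset.mem_sdiff]
    refine ⟨subset_of_mem hX hCX hxC, fun hxB => ?_⟩
    exact absurd (eq_of_mem_inter hX hCX hB hxC hxB) hCB
  · intro x hx
    rw [Finset.mem_sdiff] at hx
    obtain ⟨C, hC, hxC⟩ := exists_mem hX hx.1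
    have hCB : C ≠ B := fun h => hx.2 (h ▸ hxC)
    simp only [Finset.mem_sup, id]
    exact ⟨C, Finset.mem_erase.2 ⟨hCB, hC⟩, hxC⟩

lemma subset_sdiff_of_not_subset {V : Finset α} {X Y : Finset (Finset α)}
    (hX : IsPartition V X) (hY : IsPartition V Y) (hXY : PartLE X Y)
    {B : Finset α} (hB : B ∈ X) {C : Finset α} (hC : C ∈ Y) (hCB : ¬ C ⊆ B) :
    C ⊆ V \ B := by
  obtain ⟨B', hB', hCB'⟩ := exists_block_subset hX hY hXY hC
  have hBB' : B' ≠ B := fun h => hCB (h ▸ hCB')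
  intro x hx
  rw [Finset.mem_sdiff]
  refine ⟨subset_of_mem hY hC hx, fun hxB => ?_⟩
  have : x ∈ B' ∩ B := Finset.mem_inter.2 ⟨hCB' hx, hxB⟩
  rw [hX.2.1 B' hB' B hB hBB'] at this
  exact absurd this (Finset.notMem_empty x)

lemma isPartition_filter_not {V : Finset α} {X Y : Finset (Finset α)}
    (hX : IsPartition V X) (hY : IsPartition V Y) (hXY : PartLE X Y)
    {B : Finset α} (hB : B ∈ X) :
    IsPartition (V \ B) (Y.filter (fun C => ¬ C ⊆ B)) := by
  refine ⟨fun C hC => hY.1 C (Finset.mem_filter.1 hC).1,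
    fun C hC D hD h => hY.2.1 C (Finset.mem_filter.1 hC).1 D (Finset.mem_filter.1 hD).1 h, ?_⟩
  apply Finset.Subset.antisymm
  · intro x hx
    obtain ⟨C, hC, hxC⟩ := by simpa using Finset.mem_sup.1 hx
    exact subset_sdiff_of_not_subset hX hY hXY hB hC.1 hC.2 hxC
  · intro x hx
    rw [Finset.mem_sdiff] at hx
    obtain ⟨C, hC, hxC⟩ := exists_mem hY hx.1
    have hCB : ¬ C ⊆ B := fun h => hx.2 (h hxC)
    simp only [Finset.mem_sup, id]
    exact ⟨C, Finset.mem_filter.2 ⟨hC, hCB⟩, hxC⟩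

lemma partLE_erase {V : Finset α} {X Y : Finset (Finset α)}
    (hX : IsPartition V X) (hY : IsPartition V Y) (hXY : PartLE X Y)
    {B : Finset α} (hB : B ∈ X) :
    PartLE (X.erase B) (Y.filter (fun C => ¬ C ⊆ B)) := by
  intro B' hB'
  have hB'X := Finset.mem_of_mem_erase hB'
  have hB'B := Finset.ne_of_mem_erase hB'
  obtain ⟨S, hS, hsup⟩ := hXY B' hB'X
  rw [Finset.mem_powerset] at hS
  refine ⟨S, Finset.mem_powerset.2 fun C hCS => Finset.mem_filter.2 ⟨hS hCS, ?_⟩, hsup⟩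
  intro hCB
  have hCB' : C ⊆ B' := by rw [← hsup]; exact Finset.le_sup (f := id) hCS
  have h1 : C ⊆ B' ∩ B := Finset.subset_inter hCB' hCB
  rw [hX.2.1 B' hB'X B hB hB'B] at h1
  exact hY.1 C (hS hCS) (Finset.subset_empty.1 h1)

lemma isPartition_empty : IsPartition (∅ : Finset α) (∅ : Finset (Finset α)) :=
  ⟨fun B hB => absurd hB (Finset.notMem_empty _),
   fun B hB => absurd hB (Finset.notMem_empty _), rfl⟩

lemma partLE_empty (Y : Finset (Finset α)) : PartLE (∅ : Finset (Finset α)) Y :=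
  fun B hB => absurd hB (Finset.notMem_empty _)

lemma mem_parts {V : Finset α} {Y W : Finset (Finset α)} :
    W ∈ (V.powerset.powerset).filter (fun W => IsPartition V W ∧ PartLE W Y) ↔
      IsPartition V W ∧ PartLE W Y := by
  simp only [Finset.mem_filter, Finset.mem_powerset, and_iff_right_iff_imp]
  rintro ⟨hW, _⟩
  intro B hB
  rw [Finset.mem_powerset]
  exact subset_of_mem hW hB

lemma nonempty_of_part {V : Finset α} {W : Finset (Finset α)} (hV : V.Nonempty)
    (hW : IsPartition V W) : W ≠ ∅ := by
  intro h
  obtain ⟨x, hx⟩ := hV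
  obtain ⟨B, hB, -⟩ := exists_mem hW hx
  rw [h] at hB
  exact absurd hB (Finset.notMem_empty _)

lemma neg_one_pow_sub {a b : ℕ} (h : b ≤ a) : (-1 : ℤ)^(a-b) = (-1)^a * (-1)^b := by
  have h1 : (-1 : ℤ)^b * (-1)^b = 1 := by
    rw [← pow_add, ← two_mul, pow_mul]
    norm_num
  calc (-1 : ℤ)^(a-b) = (-1)^(a-b) * ((-1)^b * (-1)^b) := by rw [h1, mul_one]
  _ = ((-1)^(a-b) * (-1)^b) * (-1)^b := by ring
  _ = (-1)^a * (-1)^b := by rw [← pow_add, Nat.sub_add_cancel h]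

lemma split_partition {V : Finset α} {Y S : Finset (Finset α)} (hY : IsPartition V Y)
    (hS : S ⊆ Y) :
    IsPartition (V \ S.sup id) (Y.filter (fun C => ¬ C ⊆ S.sup id)) := by
  refine ⟨fun C hC => hY.1 C (Finset.mem_filter.1 hC).1,
    fun C hC D hD h => hY.2.1 C (Finset.mem_filter.1 hC).1 D (Finset.mem_filter.1 hD).1 h, ?_⟩
  apply Finset.Subset.antisymm
  · intro x hx
    simp only [Finset.mem_sup, id] at hx
    obtain ⟨C, hC, hxC⟩ := hx
    rw [Finset.mem_filter] at hC
    rw [Finset.mem_sdiff]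
    refine ⟨subset_of_mem hY hC.1 hxC, fun hxT => ?_⟩
    simp only [Finset.mem_sup, id] at hxT
    obtain ⟨C', hC'S, hxC'⟩ := hxT
    have : C = C' := eq_of_mem_inter hY hC.1 (hS hC'S) hxC hxC'
    exact hC.2 (this ▸ Finset.le_sup (f := id) hC'S)
  · intro x hx
    rw [Finset.mem_sdiff] at hx
    obtain ⟨C, hC, hxC⟩ := exists_mem hY hx.1
    have : ¬ C ⊆ S.sup id := fun h => hx.2 (h hxC)
    simp only [Finset.mem_sup, id]
    exact ⟨C, Finset.mem_filter.2 ⟨hC, this⟩, hxC⟩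

lemma bsum_empty {Y : Finset (Finset α)} (hY : IsPartition (∅ : Finset α) Y) :
    ∑ W ∈ ((∅ : Finset α).powerset.powerset).filter
        (fun W => IsPartition ∅ W ∧ PartLE W Y),
      (-1 : ℤ)^W.card * (W.card.factorial : ℤ) = (-1)^Y.card := by
  have hY0 := eq_empty hY
  subst hY0
  have hdom : ((∅ : Finset α).powerset.powerset).filter
      (fun W => IsPartition ∅ W ∧ PartLE W (∅ : Finset (Finset α))) = {∅} := by
    ext W
    rw [mem_parts, Finset.mem_singleton]
    constructor
    · rintro ⟨hW, -⟩; exact eq_empty hW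
    · rintro rfl; exact ⟨isPartition_empty, partLE_empty _⟩
  rw [hdom]
  simp

lemma bsum : ∀ n : ℕ, ∀ V : Finset α, V.card ≤ n → ∀ Y : Finset (Finset α),
    IsPartition V Y →
    ∑ W ∈ (V.powerset.powerset).filter (fun W => IsPartition V W ∧ PartLE W Y),
      (-1 : ℤ)^W.card * (W.card.factorial : ℤ) = (-1)^Y.card := by
  intro n
  induction n with
  | zero =>
    intro V hV Y hY
    rw [Finset.card_eq_zero.1 (Nat.le_zero.1 hV)] at hY ⊢
    exact bsum_empty hY
  | succ n ih =>
    intro V hV Y hY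
    rcases Finset.eq_empty_or_nonempty V with rfl | hVne
    · exact bsum_empty hY
    -- abbreviations
    set P := (V.powerset.powerset).filter (fun W => IsPartition V W ∧ PartLE W Y) with hP
    have hYne : Y ≠ ∅ := nonempty_of_part hVne hY
    -- Step 1: expand factorial as sum over blocks
    have step1 : ∀ W ∈ P, (-1 : ℤ)^W.card * (W.card.factorial : ℤ) =
        ∑ T ∈ W, (-1 : ℤ)^W.card * ((W.card - 1).factorial : ℤ) := by
      intro W hW
      rw [mem_parts] at hW
      have hWne : W ≠ ∅ := nonempty_of_part hVne hW.1
      have hcard : 0 < W.card := Finset.card_pos.2 (Finset.nonempty_iff_ne_empty.2 hWne)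
      rw [Finset.sum_const, nsmul_eq_mul]
      have : (W.card.factorial : ℤ) = (W.card : ℤ) * ((W.card - 1).factorial : ℤ) := by
        rw [← Nat.cast_mul, Nat.mul_factorial_pred hcard.ne']
      rw [this]; ring
    rw [Finset.sum_congr rfl step1]
    -- Step 2: indicator form and swap
    have step2 : ∀ W ∈ P, ∑ T ∈ W, (-1 : ℤ)^W.card * ((W.card - 1).factorial : ℤ) =
        ∑ T ∈ V.powerset, if T ∈ W then (-1 : ℤ)^W.card * ((W.card - 1).factorial : ℤ) else 0 := by
      intro W hW
      rw [Finset.sum_ite_mem]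
      have hsub : W ⊆ V.powerset := Finset.mem_powerset.1 (Finset.mem_filter.1 hW).1
      rw [Finset.inter_eq_right.2 hsub]
    rw [Finset.sum_congr rfl step2, Finset.sum_comm]
    -- Step 4/5: inner sums
    have step5 : ∀ T ∈ V.powerset,
        (∑ W ∈ P, if T ∈ W then (-1 : ℤ)^W.card * ((W.card - 1).factorial : ℤ) else 0) =
        if (Y.filter (fun C => C ⊆ T)).Nonempty ∧ (Y.filter (fun C => C ⊆ T)).sup id = T then
          -(-1 : ℤ)^(Y.card - (Y.filter (fun C => C ⊆ T)).card) else 0 := by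
      intro T hT
      rw [← Finset.sum_filter]
      by_cases hcond : (Y.filter (fun C => C ⊆ T)).Nonempty ∧ (Y.filter (fun C => C ⊆ T)).sup id = T
      · rw [if_pos hcond]
        set S := Y.filter (fun C => C ⊆ T) with hSdef
        have hSY : S ⊆ Y := Finset.filter_subset _ _
        have hTne : T.Nonempty := by
          obtain ⟨C, hC⟩ := hcond.1
          rw [hSdef, Finset.mem_filter] at hC
          obtain ⟨x, hx⟩ := Finset.nonempty_iff_ne_empty.2 (hY.1 C hC.1)
          exact ⟨x, hC.2 hx⟩
        have hTV : T ⊆ V := Finset.mem_powerset.1 hT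
        have hY' : IsPartition (V \ T) (Y.filter (fun C => ¬ C ⊆ T)) := by
          have := split_partition hY hSY
          rwa [hcond.2] at this
        have hVT : (V \ T).card ≤ n := by
          have h1 : (V \ T).card = V.card - T.card := Finset.card_sdiff_of_subset hTV
          have h2 : 0 < T.card := Finset.card_pos.2 hTne
          omega
        have hYcard : (Y.filter (fun C => ¬ C ⊆ T)).card = Y.card - S.card := by
          have := Finset.card_filter_add_card_filter_not
            (s := Y) (p := fun C => C ⊆ T)
          rw [← hSdef] at this
          omega
        rw [Finset.sum_nbij' (i := fun W => W.erase T) (j := fun W' => insert T W')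
          (g := fun W' => -((-1 : ℤ)^W'.card * (W'.card.factorial : ℤ)))
          (t := ((V \ T).powerset.powerset).filter
            (fun W' => IsPartition (V \ T) W' ∧ PartLE W' (Y.filter (fun C => ¬ C ⊆ T))))
          (hi := ?_) (hj := ?_) (left_neg := ?_) (right_neg := ?_) (h := ?_)]
        · rw [Finset.sum_neg_distrib, ih (V \ T) hVT _ hY', hYcard]
        · -- hi
          intro W hW
          rw [Finset.mem_filter] at hW
          obtain ⟨hWP, hTW⟩ := hW
          rw [mem_parts] at hWP ⊢
          exact ⟨isPartition_erase hWP.1 hTW, partLE_erase hWP.1 hY hWP.2 hTW⟩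
        · -- hj
          intro W' hW'
          rw [mem_parts] at hW'
          obtain ⟨hW'p, hW'le⟩ := hW'
          have hTnotin : T ∉ W' := by
            intro h
            obtain ⟨x, hx⟩ := hTne
            have := subset_of_mem hW'p h hx
            rw [Finset.mem_sdiff] at this
            exact this.2 hx
          rw [Finset.mem_filter]
          refine ⟨?_, Finset.mem_insert_self _ _⟩
          rw [mem_parts]
          constructor
          · -- IsPartition V (insert T W')
            refine ⟨?_, ?_, ?_⟩
            · intro B hB
              rcases Finset.mem_insert.1 hB with rfl | hB'
              · exact Finset.nonempty_iff_ne_empty.1 hTne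
              · exact hW'p.1 B hB'
            · intro B hB C hC hBC
              rcases Finset.mem_insert.1 hB with rfl | hB' <;>
                rcases Finset.mem_insert.1 hC with rfl | hC'
              · exact absurd rfl hBC
              · -- B = T, C ∈ W'
                rw [Finset.eq_empty_iff_forall_notMem]
                intro x hx
                rw [Finset.mem_inter] at hx
                have := subset_of_mem hW'p hC' hx.2
                rw [Finset.mem_sdiff] at this
                exact this.2 hx.1
              · rw [Finset.eq_empty_iff_forall_notMem]
                intro x hx
                rw [Finset.mem_inter] at hx
                have := subset_of_mem hW'p hB' hx.1
                rw [Finset.mem_sdiff] at this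
                exact this.2 hx.2
              · exact hW'p.2.1 B hB' C hC' hBC
            · rw [Finset.sup_insert, hW'p.2.2]
              simpa using Finset.union_sdiff_of_subset hTV
          · -- PartLE (insert T W') Y
            intro B hB
            rcases Finset.mem_insert.1 hB with rfl | hB'
            · exact ⟨S, Finset.mem_powerset.2 hSY, hcond.2⟩
            · obtain ⟨S₁, hS₁, hsup₁⟩ := hW'le B hB'
              rw [Finset.mem_powerset] at hS₁
              exact ⟨S₁, Finset.mem_powerset.2
                (hS₁.trans (Finset.filter_subset _ _)), hsup₁⟩
        · -- left_inv
          intro W hW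
          rw [Finset.mem_filter] at hW
          exact Finset.insert_erase hW.2
        · -- right_inv
          intro W' hW'
          rw [mem_parts] at hW'
          have hTnotin : T ∉ W' := by
            intro h
            obtain ⟨x, hx⟩ := hTne
            have := subset_of_mem hW'.1 h hx
            rw [Finset.mem_sdiff] at this
            exact this.2 hx
          exact Finset.erase_insert hTnotin
        · -- weights
          intro W hW
          rw [Finset.mem_filter] at hW
          have hcard : W.card = (W.erase T).card + 1 := by
            rw [Finset.card_erase_of_mem hW.2]
            have : 0 < W.card := Finset.card_pos.2 ⟨T, hW.2⟩
            omega
          rw [hcard, Nat.add_sub_cancel, pow_succ]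
          ring
      · rw [if_neg hcond]
        have hdom : P.filter (fun W => T ∈ W) = ∅ := by
          rw [Finset.eq_empty_iff_forall_notMem]
          intro W hW
          rw [Finset.mem_filter] at hW
          obtain ⟨hWP, hTW⟩ := hW
          rw [mem_parts] at hWP
          obtain ⟨hWp, hWle⟩ := hWP
          obtain ⟨S₀, hS₀, hsup₀⟩ := hWle T hTW
          rw [Finset.mem_powerset] at hS₀
          have hfil : Y.filter (fun C => C ⊆ T) = S₀ := by
            have := filter_subfamily hY hS₀
            rwa [hsup₀] at this
          apply hcond
          have hS₀ne : S₀.Nonempty := by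
            rw [Finset.nonempty_iff_ne_empty]
            rintro rfl
            have : T = ∅ := by simpa using hsup₀.symm
            exact hWp.1 T hTW this
          rw [hfil, hsup₀]
          exact ⟨hS₀ne, rfl⟩
        rw [hdom, Finset.sum_empty]
    rw [Finset.sum_congr rfl step5, ← Finset.sum_filter]
    -- Step 7: reindex by subfamilies S of Y
    rw [Finset.sum_nbij' (i := fun T => Y.filter (fun C => C ⊆ T)) (j := fun S => S.sup id)
      (t := Y.powerset.filter (fun S => S.Nonempty))
      (hi := ?_) (hj := ?_) (left_neg := ?_) (right_neg := ?_) (h := ?_)]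
    · -- final computation
      have htotal : ∑ S ∈ Y.powerset, -(-1 : ℤ)^(Y.card - S.card) = 0 := by
        have : ∀ S ∈ Y.powerset, -(-1 : ℤ)^(Y.card - S.card) =
            -((-1 : ℤ)^Y.card * (-1)^S.card) := by
          intro S hS
          rw [neg_one_pow_sub (Finset.card_le_card (Finset.mem_powerset.1 hS))]
        rw [Finset.sum_congr rfl this]
        rw [Finset.sum_neg_distrib, ← Finset.mul_sum,
          Finset.sum_powerset_neg_one_pow_card, if_neg hYne]
        ring
      have hsplit := Finset.sum_filter_add_sum_filter_not Y.powerset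
        (fun S => S.Nonempty) (fun S => -(-1 : ℤ)^(Y.card - S.card))
      have hnotne : Y.powerset.filter (fun S => ¬ S.Nonempty) = {∅} := by
        ext S
        simp only [Finset.mem_filter, Finset.mem_powerset, Finset.mem_singleton,
          Finset.not_nonempty_iff_eq_empty]
        constructor
        · rintro ⟨-, h⟩; exact h
        · rintro rfl; exact ⟨Finset.empty_subset _, rfl⟩
      rw [hnotne] at hsplit
      simp only [Finset.sum_singleton, Finset.card_empty, Nat.sub_zero] at hsplit
      rw [htotal] at hsplit
      linarith
    · -- hi
      intro T hT
      rw [Finset.mem_filter] at hT ⊢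
      exact ⟨Finset.mem_powerset.2 (Finset.filter_subset _ _), hT.2.1⟩
    · -- hj
      intro S hS
      rw [Finset.mem_filter] at hS ⊢
      rw [Finset.mem_powerset] at hS
      have hfil := filter_subfamily hY hS.1
      constructor
      · rw [Finset.mem_powerset]
        show S.sup id ⊆ V
        have := Finset.sup_le (s := S) (f := id) (a := V)
          (fun C hC => Finset.le_iff_subset.2 (subset_of_mem hY (hS.1 hC)))
        exact this
      · rw [hfil]
        exact ⟨hS.2, rfl⟩
    · -- left_inv
      intro T hT
      rw [Finset.mem_filter] at hT
      exact hT.2.2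
    · -- right_inv
      intro S hS
      rw [Finset.mem_filter, Finset.mem_powerset] at hS
      exact filter_subfamily hY hS.1
    · -- weights
      intro T hT
      rfl

lemma asum {V : Finset α} (hVne : V.Nonempty) {Y : Finset (Finset α)}
    (hY : IsPartition V Y) :
    ∑ W ∈ (V.powerset.powerset).filter (fun W => IsPartition V W ∧ PartLE W Y),
      (-1 : ℤ)^(W.card - 1) * ((W.card - 1).factorial : ℤ) =
      if Y.card = 1 then 1 else 0 := by
  set P := (V.powerset.powerset).filter (fun W => IsPartition V W ∧ PartLE W Y) with hP
  have hYne : Y ≠ ∅ := nonempty_of_part hVne hY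
  obtain ⟨C₀, hC₀⟩ := Finset.nonempty_iff_ne_empty.2 hYne
  -- Step 1: the summand equals the sum over the unique block containing C₀
  have step1 : ∀ W ∈ P, (-1 : ℤ)^(W.card - 1) * ((W.card - 1).factorial : ℤ) =
      ∑ T ∈ W, if C₀ ⊆ T then (-1 : ℤ)^(W.card - 1) * ((W.card - 1).factorial : ℤ) else 0 := by
    intro W hW
    rw [mem_parts] at hW
    obtain ⟨T₀, hT₀W, hCT₀⟩ := exists_block_subset hW.1 hY hW.2 hC₀
    have huniq : W.filter (fun T => C₀ ⊆ T) = {T₀} := by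
      ext T
      simp only [Finset.mem_filter, Finset.mem_singleton]
      constructor
      · rintro ⟨hTW, hCT⟩
        obtain ⟨x, hx⟩ := Finset.nonempty_iff_ne_empty.2 (hY.1 C₀ hC₀)
        exact eq_of_mem_inter hW.1 hTW hT₀W (hCT hx) (hCT₀ hx)
      · rintro rfl; exact ⟨hT₀W, hCT₀⟩
    rw [← Finset.sum_filter, huniq, Finset.sum_singleton]
  rw [Finset.sum_congr rfl step1]
  -- Step 2: indicator over V.powerset and swap
  have step2 : ∀ W ∈ P, (∑ T ∈ W, if C₀ ⊆ T then
        (-1 : ℤ)^(W.card - 1) * ((W.card - 1).factorial : ℤ) else 0) =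
      ∑ T ∈ V.powerset, if T ∈ W then
        (if C₀ ⊆ T then (-1 : ℤ)^(W.card - 1) * ((W.card - 1).factorial : ℤ) else 0) else 0 := by
    intro W hW
    rw [Finset.sum_ite_mem]
    have hsub : W ⊆ V.powerset := Finset.mem_powerset.1 (Finset.mem_filter.1 hW).1
    rw [Finset.inter_eq_right.2 hsub]
  rw [Finset.sum_congr rfl step2, Finset.sum_comm]
  -- Step 3: per-T inner sums
  have step5 : ∀ T ∈ V.powerset,
      (∑ W ∈ P, if T ∈ W then
        (if C₀ ⊆ T then (-1 : ℤ)^(W.card - 1) * ((W.card - 1).factorial : ℤ) else 0) else 0) =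
      if ((Y.filter (fun C => C ⊆ T)).Nonempty ∧ (Y.filter (fun C => C ⊆ T)).sup id = T) ∧ C₀ ⊆ T
      then (-1 : ℤ)^(Y.card - (Y.filter (fun C => C ⊆ T)).card) else 0 := by
    intro T hT
    by_cases hCT : C₀ ⊆ T
    swap
    · simp only [hCT, if_false, and_false, Finset.sum_const_zero, ite_self]
    simp only [hCT, if_true, and_true]
    rw [← Finset.sum_filter]
    by_cases hcond : (Y.filter (fun C => C ⊆ T)).Nonempty ∧ (Y.filter (fun C => C ⊆ T)).sup id = T
    · rw [if_pos hcond]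
      set S := Y.filter (fun C => C ⊆ T) with hSdef
      have hSY : S ⊆ Y := Finset.filter_subset _ _
      have hTne : T.Nonempty := by
        obtain ⟨C, hC⟩ := hcond.1
        rw [hSdef, Finset.mem_filter] at hC
        obtain ⟨x, hx⟩ := Finset.nonempty_iff_ne_empty.2 (hY.1 C hC.1)
        exact ⟨x, hC.2 hx⟩
      have hTV : T ⊆ V := Finset.mem_powerset.1 hT
      have hY' : IsPartition (V \ T) (Y.filter (fun C => ¬ C ⊆ T)) := by
        have := split_partition hY hSY
        rwa [hcond.2] at this
      have hYcard : (Y.filter (fun C => ¬ C ⊆ T)).card = Y.card - S.card := by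
        have := Finset.card_filter_add_card_filter_not
          (s := Y) (p := fun C => C ⊆ T)
        rw [← hSdef] at this
        omega
      rw [Finset.sum_nbij' (i := fun W => W.erase T) (j := fun W' => insert T W')
        (g := fun W' => (-1 : ℤ)^W'.card * (W'.card.factorial : ℤ))
        (t := ((V \ T).powerset.powerset).filter
          (fun W' => IsPartition (V \ T) W' ∧ PartLE W' (Y.filter (fun C => ¬ C ⊆ T))))
        (hi := ?_) (hj := ?_) (left_neg := ?_) (right_neg := ?_) (h := ?_)]
      · rw [bsum (V \ T).card (V \ T) le_rfl _ hY', hYcard]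
      · intro W hW
        rw [Finset.mem_filter] at hW
        obtain ⟨hWP, hTW⟩ := hW
        rw [mem_parts] at hWP ⊢
        exact ⟨isPartition_erase hWP.1 hTW, partLE_erase hWP.1 hY hWP.2 hTW⟩
      · intro W' hW'
        rw [mem_parts] at hW'
        obtain ⟨hW'p, hW'le⟩ := hW'
        have hTnotin : T ∉ W' := by
          intro h
          obtain ⟨x, hx⟩ := hTne
          have := subset_of_mem hW'p h hx
          rw [Finset.mem_sdiff] at this
          exact this.2 hx
        rw [Finset.mem_filter]
        refine ⟨?_, Finset.mem_insert_self _ _⟩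
        rw [mem_parts]
        constructor
        · refine ⟨?_, ?_, ?_⟩
          · intro B hB
            rcases Finset.mem_insert.1 hB with rfl | hB'
            · exact Finset.nonempty_iff_ne_empty.1 hTne
            · exact hW'p.1 B hB'
          · intro B hB C hC hBC
            rcases Finset.mem_insert.1 hB with rfl | hB' <;>
              rcases Finset.mem_insert.1 hC with rfl | hC'
            · exact absurd rfl hBC
            · rw [Finset.eq_empty_iff_forall_notMem]
              intro x hx
              rw [Finset.mem_inter] at hx
              have := subset_of_mem hW'p hC' hx.2
              rw [Finset.mem_sdiff] at this
              exact this.2 hx.1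
            · rw [Finset.eq_empty_iff_forall_notMem]
              intro x hx
              rw [Finset.mem_inter] at hx
              have := subset_of_mem hW'p hB' hx.1
              rw [Finset.mem_sdiff] at this
              exact this.2 hx.2
            · exact hW'p.2.1 B hB' C hC' hBC
          · rw [Finset.sup_insert, hW'p.2.2]
            simpa using Finset.union_sdiff_of_subset hTV
        · intro B hB
          rcases Finset.mem_insert.1 hB with rfl | hB'
          · exact ⟨S, Finset.mem_powerset.2 hSY, hcond.2⟩
          · obtain ⟨S₁, hS₁, hsup₁⟩ := hW'le B hB'
            rw [Finset.mem_powerset] at hS₁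
            exact ⟨S₁, Finset.mem_powerset.2
              (hS₁.trans (Finset.filter_subset _ _)), hsup₁⟩
      · intro W hW
        rw [Finset.mem_filter] at hW
        exact Finset.insert_erase hW.2
      · intro W' hW'
        rw [mem_parts] at hW'
        have hTnotin : T ∉ W' := by
          intro h
          obtain ⟨x, hx⟩ := hTne
          have := subset_of_mem hW'.1 h hx
          rw [Finset.mem_sdiff] at this
          exact this.2 hx
        exact Finset.erase_insert hTnotin
      · intro W hW
        rw [Finset.mem_filter] at hW
        have hcard : W.card = (W.erase T).card + 1 := by
          rw [Finset.card_erase_of_mem hW.2]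
          have : 0 < W.card := Finset.card_pos.2 ⟨T, hW.2⟩
          omega
        rw [hcard, Nat.add_sub_cancel]
    · rw [if_neg hcond]
      have hdom : P.filter (fun W => T ∈ W) = ∅ := by
        rw [Finset.eq_empty_iff_forall_notMem]
        intro W hW
        rw [Finset.mem_filter] at hW
        obtain ⟨hWP, hTW⟩ := hW
        rw [mem_parts] at hWP
        obtain ⟨hWp, hWle⟩ := hWP
        obtain ⟨S₀, hS₀, hsup₀⟩ := hWle T hTW
        rw [Finset.mem_powerset] at hS₀
        have hfil : Y.filter (fun C => C ⊆ T) = S₀ := by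
          have := filter_subfamily hY hS₀
          rwa [hsup₀] at this
        apply hcond
        have hS₀ne : S₀.Nonempty := by
          rw [Finset.nonempty_iff_ne_empty]
          rintro rfl
          have : T = ∅ := by simpa using hsup₀.symm
          exact hWp.1 T hTW this
        rw [hfil, hsup₀]
        exact ⟨hS₀ne, rfl⟩
      rw [hdom, Finset.sum_empty]
  rw [Finset.sum_congr rfl step5, ← Finset.sum_filter]
  -- Step 4: reindex by subfamilies S of Y containing C₀
  rw [Finset.sum_nbij' (i := fun T => Y.filter (fun C => C ⊆ T)) (j := fun S => S.sup id)
    (g := fun S => (-1 : ℤ)^(Y.card - S.card))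
    (t := Y.powerset.filter (fun S => C₀ ∈ S))
    (hi := ?_) (hj := ?_) (left_neg := ?_) (right_neg := ?_) (h := ?_)]
  · -- final computation: reindex by S' = S.erase C₀
    rw [Finset.sum_nbij' (i := fun S => S.erase C₀) (j := fun S' => insert C₀ S')
      (g := fun S' => (-1 : ℤ)^((Y.erase C₀).card - S'.card))
      (t := (Y.erase C₀).powerset)
      (hi := ?_) (hj := ?_) (left_neg := ?_) (right_neg := ?_) (h := ?_)]
    · have hconv : ∀ S' ∈ (Y.erase C₀).powerset, (-1 : ℤ)^((Y.erase C₀).card - S'.card) =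
          (-1 : ℤ)^(Y.erase C₀).card * (-1)^S'.card := fun S' hS' =>
        neg_one_pow_sub (Finset.card_le_card (Finset.mem_powerset.1 hS'))
      rw [Finset.sum_congr rfl hconv, ← Finset.mul_sum,
        Finset.sum_powerset_neg_one_pow_card]
      have hcard : Y.card = (Y.erase C₀).card + 1 := by
        rw [Finset.card_erase_of_mem hC₀]
        have : 0 < Y.card := Finset.card_pos.2 ⟨C₀, hC₀⟩
        omega
      by_cases h1 : Y.erase C₀ = ∅
      · rw [if_pos h1, mul_one, h1]
        have : Y.card = 1 := by
          have := Finset.card_eq_zero.2 h1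
          omega
        rw [if_pos this]
        simp
      · rw [if_neg h1, mul_zero]
        have h2 : Y.card ≠ 1 := by
          intro h
          apply h1
          rw [Finset.card_eq_zero.symm] at h1
          have := Finset.card_erase_of_mem hC₀
          rw [← Finset.card_eq_zero]
          omega
        rw [if_neg h2]
    · intro S hS
      rw [Finset.mem_filter, Finset.mem_powerset] at hS
      rw [Finset.mem_powerset]
      exact Finset.erase_subset_erase _ hS.1
    · intro S' hS'
      rw [Finset.mem_powerset] at hS'
      rw [Finset.mem_filter, Finset.mem_powerset]
      refine ⟨Finset.insert_subset hC₀ (hS'.trans (Finset.erase_subset _ _)),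
        Finset.mem_insert_self _ _⟩
    · intro S hS
      rw [Finset.mem_filter] at hS
      exact Finset.insert_erase hS.2
    · intro S' hS'
      rw [Finset.mem_powerset] at hS'
      refine Finset.erase_insert fun h => ?_
      exact absurd (hS' h) (Finset.notMem_erase _ _)
    · intro S hS
      rw [Finset.mem_filter, Finset.mem_powerset] at hS
      have h1 : S.card = (S.erase C₀).card + 1 := by
        rw [Finset.card_erase_of_mem hS.2]
        have : 0 < S.card := Finset.card_pos.2 ⟨C₀, hS.2⟩
        omega
      have h2 : Y.card = (Y.erase C₀).card + 1 := by
        rw [Finset.card_erase_of_mem hC₀]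
        have : 0 < Y.card := Finset.card_pos.2 ⟨C₀, hC₀⟩
        omega
      have : Y.card - S.card = (Y.erase C₀).card - (S.erase C₀).card := by omega
      rw [this]
  · intro T hT
    rw [Finset.mem_filter] at hT ⊢
    refine ⟨Finset.mem_powerset.2 (Finset.filter_subset _ _), ?_⟩
    rw [Finset.mem_filter]
    exact ⟨hC₀, hT.2.2⟩
  · intro S hS
    rw [Finset.mem_filter] at hS ⊢
    rw [Finset.mem_powerset] at hS
    have hfil := filter_subfamily hY hS.1
    constructor
    · rw [Finset.mem_powerset]
      show S.sup id ⊆ V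
      exact Finset.sup_le (fun C hC => Finset.le_iff_subset.2 (subset_of_mem hY (hS.1 hC)))
    · rw [hfil]
      exact ⟨⟨⟨C₀, hS.2⟩, rfl⟩, Finset.le_sup (f := id) hS.2⟩
  · intro T hT
    rw [Finset.mem_filter] at hT
    exact hT.2.1.2
  · intro S hS
    rw [Finset.mem_filter, Finset.mem_powerset] at hS
    exact filter_subfamily hY hS.1
  · intro T hT
    rfl

lemma mem_interval {U : Finset α} {X Y Z : Finset (Finset α)} :
    Z ∈ (U.powerset.powerset).filter
        (fun Z => IsPartition U Z ∧ PartLE X Z ∧ PartLE Z Y) ↔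
      IsPartition U Z ∧ PartLE X Z ∧ PartLE Z Y := by
  simp only [Finset.mem_filter, Finset.mem_powerset, and_iff_right_iff_imp]
  rintro ⟨hZ, -⟩
  intro B hB
  rw [Finset.mem_powerset]
  exact subset_of_mem hZ hB

lemma msum : ∀ n : ℕ, ∀ (U : Finset α) (X Y : Finset (Finset α)), X.card ≤ n →
    IsPartition U X → IsPartition U Y → PartLE X Y →
    ∑ Z ∈ (U.powerset.powerset).filter
        (fun Z => IsPartition U Z ∧ PartLE X Z ∧ PartLE Z Y),
      (∏ B ∈ X, ((-1 : ℤ)^((Z.filter (fun C => C ⊆ B)).card - 1) *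
        (((Z.filter (fun C => C ⊆ B)).card - 1).factorial : ℤ))) =
      if X = Y then 1 else 0 := by
  intro n
  induction n with
  | zero =>
    intro U X Y hn hX hY hXY
    have hX0 : X = ∅ := Finset.card_eq_zero.1 (Nat.le_zero.1 hn)
    subst hX0
    have hU : U = ∅ := by rw [← hX.2.2]; rfl
    subst hU
    have hY0 : Y = ∅ := eq_empty hY
    subst hY0
    have hdom : ((∅ : Finset α).powerset.powerset).filter
        (fun Z => IsPartition ∅ Z ∧ PartLE (∅ : Finset (Finset α)) Z ∧
          PartLE Z (∅ : Finset (Finset α))) = {∅} := by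
      ext Z
      rw [mem_interval, Finset.mem_singleton]
      constructor
      · rintro ⟨hZ, -, -⟩; exact eq_empty hZ
      · rintro rfl
        exact ⟨isPartition_empty, partLE_empty _, partLE_empty _⟩
    rw [hdom]
    simp
  | succ n ih =>
    intro U X Y hn hX hY hXY
    rcases Finset.eq_empty_or_nonempty X with rfl | ⟨B, hB⟩
    · -- same as base case
      have hU : U = ∅ := by rw [← hX.2.2]; rfl
      subst hU
      have hY0 : Y = ∅ := eq_empty hY
      subst hY0
      have hdom : ((∅ : Finset α).powerset.powerset).filter
          (fun Z => IsPartition ∅ Z ∧ PartLE (∅ : Finset (Finset α)) Z ∧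
            PartLE Z (∅ : Finset (Finset α))) = {∅} := by
        ext Z
        rw [mem_interval, Finset.mem_singleton]
        constructor
        · rintro ⟨hZ, -, -⟩; exact eq_empty hZ
        · rintro rfl
          exact ⟨isPartition_empty, partLE_empty _, partLE_empty _⟩
      rw [hdom]
      simp
    · -- inductive step: split off the block B
      have hBU : B ⊆ U := subset_of_mem hX hB
      have hBne : B.Nonempty := Finset.nonempty_iff_ne_empty.2 (hX.1 B hB)
      set X' := X.erase B with hX'def
      set YB := Y.filter (fun C => C ⊆ B) with hYBdef
      set Y' := Y.filter (fun C => ¬ C ⊆ B) with hY'def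
      have hYB : IsPartition B YB := isPartition_filter hX hY hXY hB
      have hX' : IsPartition (U \ B) X' := isPartition_erase hX hB
      have hY' : IsPartition (U \ B) Y' := isPartition_filter_not hX hY hXY hB
      have hX'Y' : PartLE X' Y' := partLE_erase hX hY hXY hB
      have hcardX' : X'.card + 1 = X.card := by
        rw [hX'def, Finset.card_erase_of_mem hB]
        have : 0 < X.card := Finset.card_pos.2 ⟨B, hB⟩
        omega
      -- the bijection Z ↦ (Z ∩ B-part, rest)
      rw [Finset.sum_nbij'
        (i := fun Z => (Z.filter (fun C => C ⊆ B), Z.filter (fun C => ¬ C ⊆ B)))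
        (j := fun p => p.1 ∪ p.2)
        (g := fun p => ((-1 : ℤ)^(p.1.card - 1) * ((p.1.card - 1).factorial : ℤ)) *
          ∏ B' ∈ X', ((-1 : ℤ)^((p.2.filter (fun C => C ⊆ B')).card - 1) *
            (((p.2.filter (fun C => C ⊆ B')).card - 1).factorial : ℤ)))
        (t := ((B.powerset.powerset).filter (fun W => IsPartition B W ∧ PartLE W YB)) ×ˢ
          (((U \ B).powerset.powerset).filter
            (fun Z' => IsPartition (U \ B) Z' ∧ PartLE X' Z' ∧ PartLE Z' Y')))
        (hi := ?_) (hj := ?_) (left_neg := ?_) (right_neg := ?_) (h := ?_)]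
      · rw [Finset.sum_product]
        dsimp only
        rw [← Finset.sum_mul_sum, asum hBne hYB,
          ih (U \ B) X' Y' (by omega) hX' hY' hX'Y']
        -- now the delta bookkeeping
        by_cases h1 : X = Y
        · subst h1
          have hYB1 : YB = {B} := by
            ext C
            rw [hYBdef, Finset.mem_filter, Finset.mem_singleton]
            constructor
            · rintro ⟨hCX, hCB⟩
              by_contra hne
              have h2 := hX.2.1 C hCX B hB hne
              have h3 : C ⊆ C ∩ B := Finset.subset_inter (le_refl C) hCB
              rw [h2] at h3
              exact hX.1 C hCX (Finset.subset_empty.1 h3)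
            · rintro rfl; exact ⟨hB, le_refl _⟩
          have hX'Y'eq : X' = Y' := by
            ext C
            rw [hX'def, hY'def, Finset.mem_erase, Finset.mem_filter]
            constructor
            · rintro ⟨hne, hCX⟩
              refine ⟨hCX, fun hCB => ?_⟩
              have h2 := hX.2.1 C hCX B hB hne
              have h3 : C ⊆ C ∩ B := Finset.subset_inter (le_refl C) hCB
              rw [h2] at h3
              exact hX.1 C hCX (Finset.subset_empty.1 h3)
            · rintro ⟨hCX, hCB⟩
              exact ⟨fun h => hCB (h ▸ le_refl B), hCX⟩
          rw [if_pos rfl, if_pos (by rw [hYB1]; rfl), if_pos hX'Y'eq]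
          norm_num
        · rw [if_neg h1]
          by_cases h2 : YB.card = 1
          · by_cases h3 : X' = Y'
            · exfalso
              apply h1
              obtain ⟨C, hC⟩ := Finset.card_eq_one.1 h2
              have hCB : C = B := by
                have := hYB.2.2
                rw [hC] at this
                simpa using this
              have hYsplit : YB ∪ Y' = Y := Finset.filter_union_filter_not_eq _ Y
              rw [← hYsplit, hC, hCB, ← h3, hX'def]
              rw [← Finset.insert_eq, Finset.insert_erase hB]
            · rw [if_neg h3, mul_zero]
          · rw [if_neg h2, zero_mul]
      · -- hi
        intro Z hZmem
        rw [mem_interval] at hZmem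
        obtain ⟨hZ, hXZ, hZY⟩ := hZmem
        rw [Finset.mem_product]
        constructor
        · rw [Finset.mem_filter]
          refine ⟨?_, isPartition_filter hX hZ hXZ hB, ?_⟩
          · rw [Finset.mem_powerset]
            intro C hC
            rw [Finset.mem_filter] at hC
            rw [Finset.mem_powerset]
            exact hC.2
          · -- PartLE (Z.filter ⊆ B) YB
            intro C hC
            rw [Finset.mem_filter] at hC
            obtain ⟨S, hS, hsup⟩ := hZY C hC.1
            rw [Finset.mem_powerset] at hS
            refine ⟨S, Finset.mem_powerset.2 fun D hD => ?_, hsup⟩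
            rw [hYBdef, Finset.mem_filter]
            refine ⟨hS hD, ?_⟩
            have : D ⊆ C := by rw [← hsup]; exact Finset.le_sup (f := id) hD
            exact this.trans hC.2
        · rw [Finset.mem_filter]
          refine ⟨?_, isPartition_filter_not hX hZ hXZ hB,
            partLE_erase hX hZ hXZ hB, ?_⟩
          · rw [Finset.mem_powerset]
            intro C hC
            rw [Finset.mem_powerset]
            exact subset_of_mem (isPartition_filter_not hX hZ hXZ hB) hC
          · -- PartLE (Z.filter ¬⊆B) Y'
            intro C hC
            have hCU' : C ⊆ U \ B := subset_of_mem (isPartition_filter_not hX hZ hXZ hB) hC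
            rw [Finset.mem_filter] at hC
            obtain ⟨S, hS, hsup⟩ := hZY C hC.1
            rw [Finset.mem_powerset] at hS
            refine ⟨S, Finset.mem_powerset.2 fun D hD => ?_, hsup⟩
            rw [hY'def, Finset.mem_filter]
            have hDC : D ⊆ C := by rw [← hsup]; exact Finset.le_sup (f := id) hD
            refine ⟨hS hD, fun hDB => ?_⟩
            obtain ⟨x, hx⟩ := Finset.nonempty_iff_ne_empty.2 (hY.1 D (hS hD))
            have h4 := hCU' (hDC hx)
            rw [Finset.mem_sdiff] at h4
            exact h4.2 (hDB hx)
      · -- hj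
        rintro ⟨W, Z'⟩ hp
        rw [Finset.mem_product] at hp
        obtain ⟨hWmem, hZ'mem⟩ := hp
        rw [Finset.mem_filter] at hWmem hZ'mem
        obtain ⟨-, hW, hWYB⟩ := hWmem
        obtain ⟨-, hZ', hX'Z', hZ'Y'⟩ := hZ'mem
        have hWsub : ∀ C ∈ W, C ⊆ B := fun C hC => subset_of_mem hW hC
        have hZ'sub : ∀ C ∈ Z', C ⊆ U \ B := fun C hC => subset_of_mem hZ' hC
        have hcross : ∀ C ∈ W, ∀ D ∈ Z', C ∩ D = ∅ := by
          intro C hC D hD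
          rw [Finset.eq_empty_iff_forall_notMem]
          intro x hx
          rw [Finset.mem_inter] at hx
          have h4 := hZ'sub D hD hx.2
          rw [Finset.mem_sdiff] at h4
          exact h4.2 (hWsub C hC hx.1)
        rw [mem_interval]
        refine ⟨⟨?_, ?_, ?_⟩, ?_, ?_⟩
        · intro C hC
          rcases Finset.mem_union.1 hC with h | h
          · exact hW.1 C h
          · exact hZ'.1 C h
        · intro C hC D hD hne
          rcases Finset.mem_union.1 hC with h | h <;>
            rcases Finset.mem_union.1 hD with h' | h'
          · exact hW.2.1 C h D h' hne
          · exact hcross C h D h'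
          · rw [Finset.inter_comm]; exact hcross D h' C h
          · exact hZ'.2.1 C h D h' hne
        · rw [Finset.sup_union, hW.2.2, hZ'.2.2]
          simpa using Finset.union_sdiff_of_subset hBU
        · -- PartLE X (W ∪ Z')
          intro B' hB'
          by_cases hBB' : B' = B
          · subst hBB'
            exact ⟨W, Finset.mem_powerset.2 Finset.subset_union_left, hW.2.2⟩
          · obtain ⟨S, hS, hsup⟩ := hX'Z' B' (Finset.mem_erase.2 ⟨hBB', hB'⟩)
            rw [Finset.mem_powerset] at hS
            exact ⟨S, Finset.mem_powerset.2
              (hS.trans Finset.subset_union_right), hsup⟩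
        · -- PartLE (W ∪ Z') Y
          intro C hC
          rcases Finset.mem_union.1 hC with h | h
          · obtain ⟨S, hS, hsup⟩ := hWYB C h
            rw [Finset.mem_powerset] at hS
            exact ⟨S, Finset.mem_powerset.2
              (hS.trans (Finset.filter_subset _ _)), hsup⟩
          · obtain ⟨S, hS, hsup⟩ := hZ'Y' C h
            rw [Finset.mem_powerset] at hS
            exact ⟨S, Finset.mem_powerset.2
              (hS.trans (Finset.filter_subset _ _)), hsup⟩
      · -- left_inv
        intro Z hZ
        exact Finset.filter_union_filter_not_eq _ Z
      · -- right_inv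
        rintro ⟨W, Z'⟩ hp
        rw [Finset.mem_product] at hp
        obtain ⟨hWmem, hZ'mem⟩ := hp
        rw [Finset.mem_filter] at hWmem hZ'mem
        obtain ⟨-, hW, -⟩ := hWmem
        obtain ⟨-, hZ', -, -⟩ := hZ'mem
        have key1 : (W ∪ Z').filter (fun C => C ⊆ B) = W := by
          ext C
          rw [Finset.mem_filter, Finset.mem_union]
          constructor
          · rintro ⟨h | h, hCB⟩
            · exact h
            · exfalso
              obtain ⟨x, hx⟩ := Finset.nonempty_iff_ne_empty.2 (hZ'.1 C h)
              have h4 := subset_of_mem hZ' h hx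
              rw [Finset.mem_sdiff] at h4
              exact h4.2 (hCB hx)
          · intro h
            exact ⟨Or.inl h, subset_of_mem hW h⟩
        have key2 : (W ∪ Z').filter (fun C => ¬ C ⊆ B) = Z' := by
          ext C
          rw [Finset.mem_filter, Finset.mem_union]
          constructor
          · rintro ⟨h | h, hCB⟩
            · exact absurd (subset_of_mem hW h) hCB
            · exact h
          · intro h
            refine ⟨Or.inr h, fun hCB => ?_⟩
            obtain ⟨x, hx⟩ := Finset.nonempty_iff_ne_empty.2 (hZ'.1 C h)
            have h4 := subset_of_mem hZ' h hx
            rw [Finset.mem_sdiff] at h4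
            exact h4.2 (hCB hx)
        simp only [key1, key2]
      · -- weights
        intro Z hZmem
        rw [mem_interval] at hZmem
        obtain ⟨hZ, hXZ, hZY⟩ := hZmem
        rw [← Finset.mul_prod_erase X _ hB]
        congr 1
        refine Finset.prod_congr rfl fun B' hB' => ?_
        have hB'X := Finset.mem_of_mem_erase hB'
        have hB'B := Finset.ne_of_mem_erase hB'
        have key : Z.filter (fun C => C ⊆ B') =
            (Z.filter (fun C => ¬ C ⊆ B)).filter (fun C => C ⊆ B') := by
          rw [Finset.filter_filter]
          refine Finset.filter_congr fun C hC => ?_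
          constructor
          · intro hCB'
            refine ⟨fun hCB => ?_, hCB'⟩
            have h2 := hX.2.1 B' hB'X B hB hB'B
            have h3 : C ⊆ B' ∩ B := Finset.subset_inter hCB' hCB
            rw [h2] at h3
            exact hZ.1 C hC (Finset.subset_empty.1 h3)
          · exact fun h => h.2
        rw [key]

/-- product form of the Möbius value -/
def moebAux (X Z : Finset (Finset α)) : ℤ :=
  ∏ B ∈ X, ((-1 : ℤ)^((Z.filter (fun C => C ⊆ B)).card - 1) *
    (((Z.filter (fun C => C ⊆ B)).card - 1).factorial : ℤ))

lemma prod_form {U : Finset α} {X Z : Finset (Finset α)}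
    (hX : IsPartition U X) (hZ : IsPartition U Z) (hXZ : PartLE X Z) :
    (-1 : ℤ)^(Z.card - X.card) *
      ∏ B ∈ X, (((Z.filter (fun C => C ⊆ B)).card - 1).factorial : ℤ) =
    moebAux X Z := by
  rw [moebAux, Finset.prod_mul_distrib, Finset.prod_pow_eq_pow_sum]
  have hc := card_sum hX hZ hXZ
  have hpos : ∀ B ∈ X, 1 ≤ (Z.filter (fun C => C ⊆ B)).card := fun B hB =>
    Finset.card_pos.2 (filter_nonempty hX hZ hXZ hB)
  have hs : ∑ B ∈ X, ((Z.filter (fun C => C ⊆ B)).card - 1) + X.card =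
      ∑ B ∈ X, (Z.filter (fun C => C ⊆ B)).card := by
    rw [Finset.card_eq_sum_ones X, ← Finset.sum_add_distrib]
    refine Finset.sum_congr rfl fun B hB => ?_
    have := hpos B hB
    omega
  have : ∑ B ∈ X, ((Z.filter (fun C => C ⊆ B)).card - 1) = Z.card - X.card := by omega
  rw [this]

lemma moeb_sum {U : Finset α} {X Y : Finset (Finset α)}
    (hX : IsPartition U X) (hY : IsPartition U Y) (hXY : PartLE X Y) :
    ∑ Z ∈ (U.powerset.powerset).filter
        (fun Z => IsPartition U Z ∧ PartLE X Z ∧ PartLE Z Y), moebAux X Z =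
      if X = Y then 1 else 0 := by
  simp only [moebAux]
  exact msum X.card U X Y le_rfl hX hY hXY

end PartAux

open PartAux in
/-- The Möbius function of an interval in the partition lattice: if
`m` satisfies the defining recursion of the Möbius function
(`Σ_{X ≤ Z ≤ Y} m(X,Z) = δ_{X,Y}` for all partitions `X ≤ Y` of `I`), then
for partitions `X ≤ Y` of `I`,
`m(X,Y) = (-1)^{ℓ(Y)-ℓ(X)} ∏_{B ∈ X} (n_B − 1)!`, where `n_B` is the number of
blocks of `Y` contained in the block `B`; in particular
`m({I},X) = (-1)^{ℓ(X)-1} (ℓ(X)−1)!`. -/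

theorem moebius_partition_lattice {α : Type*} [DecidableEq α] (I : Finset α)
    (m : Finset (Finset α) → Finset (Finset α) → ℤ)
    (hm : ∀ X Y : Finset (Finset α), IsPartition I X → IsPartition I Y → PartLE X Y →
      (∑ Z ∈ (I.powerset.powerset).filter
          (fun Z => IsPartition I Z ∧ PartLE X Z ∧ PartLE Z Y), m X Z) =
        if X = Y then 1 else 0) :
    (∀ X Y : Finset (Finset α), IsPartition I X → IsPartition I Y → PartLE X Y →
      m X Y = (-1 : ℤ) ^ (Y.card - X.card) *
        ∏ B ∈ X, (Nat.factorial ((Y.filter fun C => C ⊆ B).card - 1) : ℤ)) ∧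
    (I.Nonempty → ∀ X : Finset (Finset α), IsPartition I X →
      m {I} X = (-1 : ℤ) ^ (X.card - 1) * (Nat.factorial (X.card - 1) : ℤ)) := by
  -- the recursion step, with inductive hypothesis supplied
  have step : ∀ X Y : Finset (Finset α), IsPartition I X → IsPartition I Y → PartLE X Y →
      (∀ Z, IsPartition I Z → PartLE X Z → PartLE Z Y → Z ≠ Y → m X Z = moebAux X Z) →
      m X Y = moebAux X Y := by
    intro X Y hX hY hXY hIH
    have hYmem : Y ∈ (I.powerset.powerset).filter
        (fun Z => IsPartition I Z ∧ PartLE X Z ∧ PartLE Z Y) :=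
      mem_interval.2 ⟨hY, hXY, partLE_refl Y⟩
    have h1 := hm X Y hX hY hXY
    rw [← Finset.add_sum_erase _ _ hYmem] at h1
    have h3 := moeb_sum hX hY hXY
    rw [← Finset.add_sum_erase _ _ hYmem] at h3
    have h2 : ∑ Z ∈ ((I.powerset.powerset).filter
          (fun Z => IsPartition I Z ∧ PartLE X Z ∧ PartLE Z Y)).erase Y, m X Z =
        ∑ Z ∈ ((I.powerset.powerset).filter
          (fun Z => IsPartition I Z ∧ PartLE X Z ∧ PartLE Z Y)).erase Y, moebAux X Z := by
      refine Finset.sum_congr rfl fun Z hZ => ?_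
      have hZne := Finset.ne_of_mem_erase hZ
      have hZmem := mem_interval.1 (Finset.mem_of_mem_erase hZ)
      exact hIH Z hZmem.1 hZmem.2.1 hZmem.2.2 hZne
    rw [h2] at h1
    linarith [h1, h3]
  -- strong induction on the number of blocks of Y
  have main : ∀ n : ℕ, ∀ Y : Finset (Finset α), Y.card ≤ n →
      ∀ X : Finset (Finset α), IsPartition I X → IsPartition I Y → PartLE X Y →
      m X Y = moebAux X Y := by
    intro n
    induction n with
    | zero =>
      intro Y hn X hX hY hXY
      refine step X Y hX hY hXY fun Z hZ hXZ hZY hne => absurd (card_lt hZ hY hZY hne) (by omega)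
    | succ n ih =>
      intro Y hn X hX hY hXY
      refine step X Y hX hY hXY fun Z hZ hXZ hZY hne => ?_
      have := card_lt hZ hY hZY hne
      exact ih Z (by omega) X hX hZ hXZ
  have part1 : ∀ X Y : Finset (Finset α), IsPartition I X → IsPartition I Y → PartLE X Y →
      m X Y = (-1 : ℤ) ^ (Y.card - X.card) *
        ∏ B ∈ X, (Nat.factorial ((Y.filter fun C => C ⊆ B).card - 1) : ℤ) := by
    intro X Y hX hY hXY
    rw [main Y.card Y le_rfl X hX hY hXY, ← prod_form hX hY hXY]
  refine ⟨part1, ?_⟩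
  intro hIne X hX
  have hItop : IsPartition I ({I} : Finset (Finset α)) := by
    refine ⟨?_, ?_, ?_⟩
    · intro B hB
      rw [Finset.mem_singleton] at hB
      subst hB
      exact Finset.nonempty_iff_ne_empty.1 hIne
    · intro B hB C hC hne
      rw [Finset.mem_singleton] at hB hC
      exact absurd (hB.trans hC.symm) hne
    · simp
  have hle : PartLE ({I} : Finset (Finset α)) X := by
    intro B hB
    rw [Finset.mem_singleton] at hB
    subst hB
    exact ⟨X, Finset.mem_powerset_self X, hX.2.2⟩
  rw [part1 {I} X hItop hX hle]
  have hfil : X.filter (fun C => C ⊆ I) = X :=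
    Finset.filter_true_of_mem fun C hC => subset_of_mem hX hC
  rw [Finset.card_singleton, Finset.prod_singleton]
  rw [hfil]
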